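/- Let M > 0 and let f : ℝ → ℝ be convex, three times differentiable with continuous third derivative, and M-quasi-self-concordant (|f'''(s)| ≤ M·f''(s) for all s). Let x, δ ∈ ℝ^m with ‖δ‖_∞ ≤ 1/M, and let F(y) = ∑_{i=1}^m f(y_i). Then: (i) F(x) − F(x − δ) ≤ ∑_{i=1}^m f'(x_i)·δ_i − (2e)^{−1}·∑_{i=1}^m f''(x_i)·δ_i²; and (ii) F(x) − F(x − e^{−2}·δ) ≥ e^{−2}·( ∑_{i=1}^m f'(x_i)·δ_i − (2e)^{−1}·∑_{i=1}^m f''(x_i)·δ_i² ). -/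

import Mathlib

open scoped BigOperators

/-- Grönwall-type bound for quasi-self-concordant functions. -/
lemma qsc_gron {f : ℝ → ℝ} (M : ℝ)
    (hd2 : Differentiable ℝ (deriv (deriv f)))
    (hqsc : ∀ s : ℝ, |deriv (deriv (deriv f)) s| ≤ M * deriv (deriv f) s)
    (a b : ℝ) :
    deriv (deriv f) b ≤ deriv (deriv f) a * Real.exp (M * |b - a|) := by
  set g := deriv (deriv f) with hg
  have hbd : ∀ s, -(M * g s) ≤ deriv g s ∧ deriv g s ≤ M * g s := by
    intro s; exact abs_le.mp (hqsc s)
  have hexp : ∀ (c : ℝ) (s : ℝ), HasDerivAt (fun u : ℝ => Real.exp (c * u)) (Real.exp (c * s) * c) s := by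
    intro c s
    have h1 : HasDerivAt (fun u : ℝ => c * u) c s := by
      simpa using (hasDerivAt_id s).const_mul c
    exact (Real.hasDerivAt_exp _).comp s h1
  have hprod : ∀ (c : ℝ) (s : ℝ), HasDerivAt (fun u => g u * Real.exp (c * u))
      (deriv g s * Real.exp (c * s) + g s * (Real.exp (c * s) * c)) s :=
    fun c s => ((hd2 s).hasDerivAt).mul (hexp c s)
  rcases le_total a b with hab | hab
  · have hanti : Antitone (fun u => g u * Real.exp ((-M) * u)) := by
      apply antitone_of_deriv_nonpos
      · exact fun s => ((hprod (-M) s).differentiableAt)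
      · intro s
        rw [(hprod (-M) s).deriv]
        have h1 := (hbd s).2
        have h2 := Real.exp_pos ((-M) * s)
        nlinarith
    have h := hanti hab
    simp only at h
    have hpos := Real.exp_pos (M * b)
    have key : Real.exp ((-M) * a) * Real.exp (M * b) = Real.exp (M * |b - a|) := by
      rw [← Real.exp_add, abs_of_nonneg (by linarith : (0:ℝ) ≤ b - a)]
      ring_nf
    calc g b = g b * Real.exp ((-M) * b) * Real.exp (M * b) := by
          rw [mul_assoc, ← Real.exp_add]; ring_nf; simp
      _ ≤ g a * Real.exp ((-M) * a) * Real.exp (M * b) :=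
          mul_le_mul_of_nonneg_right h hpos.le
      _ = g a * Real.exp (M * |b - a|) := by rw [mul_assoc, key]
  · have hmono : Monotone (fun u => g u * Real.exp (M * u)) := by
      apply monotone_of_deriv_nonneg
      · exact fun s => ((hprod M s).differentiableAt)
      · intro s
        rw [(hprod M s).deriv]
        have h1 := (hbd s).1
        have h2 := Real.exp_pos (M * s)
        nlinarith
    have h := hmono hab
    simp only at h
    have hpos := Real.exp_pos (-(M * b))
    have key : Real.exp (M * a) * Real.exp (-(M * b)) = Real.exp (M * |b - a|) := by
      rw [← Real.exp_add, abs_of_nonpos (by linarith : b - a ≤ 0)]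
      ring_nf
    calc g b = g b * Real.exp (M * b) * Real.exp (-(M * b)) := by
          rw [mul_assoc, ← Real.exp_add]; ring_nf; simp
      _ ≤ g a * Real.exp (M * a) * Real.exp (-(M * b)) :=
          mul_le_mul_of_nonneg_right h hpos.le
      _ = g a * Real.exp (M * |b - a|) := by rw [mul_assoc, key]

/-- Sandwich bounds for the second derivative under a small perturbation. -/
lemma qsc_sandwich {f : ℝ → ℝ} (M : ℝ) (hM : 0 < M)
    (hd2 : Differentiable ℝ (deriv (deriv f)))
    (hqsc : ∀ s : ℝ, |deriv (deriv (deriv f)) s| ≤ M * deriv (deriv f) s)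
    (a b : ℝ) (hab : |b - a| ≤ 1 / M) :
    (Real.exp 1)⁻¹ * deriv (deriv f) a ≤ deriv (deriv f) b ∧
      deriv (deriv f) b ≤ Real.exp 1 * deriv (deriv f) a := by
  set g := deriv (deriv f) with hg
  have hg0 : ∀ s, 0 ≤ g s := by
    intro s
    have h1 := (abs_nonneg (deriv g s)).trans (hqsc s)
    nlinarith
  have hMab : M * |b - a| ≤ 1 := by
    have := (le_div_iff₀ hM).mp hab
    linarith [mul_comm M (|b - a|)]
  have hMab' : M * |a - b| ≤ 1 := by rwa [abs_sub_comm]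
  have he1 : Real.exp (M * |b - a|) ≤ Real.exp 1 := Real.exp_le_exp.mpr hMab
  have he2 : Real.exp (M * |a - b|) ≤ Real.exp 1 := Real.exp_le_exp.mpr hMab'
  have h1 := qsc_gron M hd2 hqsc a b
  have h2 := qsc_gron M hd2 hqsc b a
  constructor
  · have hub : g a ≤ g b * Real.exp 1 := by nlinarith [hg0 b]
    have hinv := mul_le_mul_of_nonneg_left hub (inv_nonneg.mpr (Real.exp_pos 1).le)
    have hcancel : (Real.exp 1)⁻¹ * (g b * Real.exp 1) = g b := by
      field_simp
    linarith [hinv, hcancel.le, hcancel.ge]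
  · nlinarith [hg0 a]

/-- Taylor-type upper bound when the second derivative is bounded below along the segment. -/
lemma taylor_upper {f : ℝ → ℝ} (hd0 : Differentiable ℝ f) (hd1 : Differentiable ℝ (deriv f))
    (x t K : ℝ) (hK : ∀ s ∈ Set.Icc (0:ℝ) 1, K ≤ deriv (deriv f) (x - s * t)) :
    f x - f (x - t) ≤ deriv f x * t - K * t ^ 2 / 2 := by
  have hL : ∀ s : ℝ, HasDerivAt (fun u : ℝ => x - u * t) (-t) s := by
    intro s; simpa using ((hasDerivAt_id s).mul_const t).const_sub x
  have hχd : ∀ s : ℝ, HasDerivAt (fun u => t * deriv f (x - u * t) + t ^ 2 * K * u)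
      (t * (deriv (deriv f) (x - s * t) * (-t)) + t ^ 2 * K) s := by
    intro s
    have h1 : HasDerivAt (fun u => deriv f (x - u * t)) (deriv (deriv f) (x - s * t) * (-t)) s :=
      by have := ((hd1 (x - s * t)).hasDerivAt).comp s (hL s); exact this
    have h3 : HasDerivAt (fun u : ℝ => t ^ 2 * K * u) (t ^ 2 * K) s := by
      simpa using (hasDerivAt_id s).const_mul (t ^ 2 * K)
    exact (h1.const_mul t).add h3
  have hχ : AntitoneOn (fun u => t * deriv f (x - u * t) + t ^ 2 * K * u) (Set.Icc 0 1) := by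
    apply antitoneOn_of_deriv_nonpos (convex_Icc 0 1)
    · exact (Differentiable.continuous (fun s => (hχd s).differentiableAt)).continuousOn
    · intro s _; exact (hχd s).differentiableAt.differentiableWithinAt
    · intro s hs
      rw [interior_Icc] at hs
      rw [(hχd s).deriv]
      have := hK s ⟨hs.1.le, hs.2.le⟩
      nlinarith [sq_nonneg t]
  have hχ' : ∀ s ∈ Set.Icc (0:ℝ) 1,
      t * deriv f (x - s * t) + t ^ 2 * K * s ≤ t * deriv f x := by
    intro s hs
    have := hχ (Set.left_mem_Icc.mpr zero_le_one) hs hs.1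
    simpa using this
  have hφd : ∀ s : ℝ, HasDerivAt
      (fun u => f x - f (x - u * t) - t * deriv f x * u + K * t ^ 2 * (u ^ 2 / 2))
      (t * deriv f (x - s * t) - t * deriv f x + K * t ^ 2 * s) s := by
    intro s
    have h1 : HasDerivAt (fun u => f (x - u * t)) (deriv f (x - s * t) * (-t)) s :=
      ((hd0 (x - s * t)).hasDerivAt).comp s (hL s)
    have h2 : HasDerivAt (fun u => f x - f (x - u * t)) (-(deriv f (x - s * t) * (-t))) s :=
      h1.const_sub (f x)
    have h3 : HasDerivAt (fun u : ℝ => t * deriv f x * u) (t * deriv f x) s := by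
      simpa using (hasDerivAt_id s).const_mul (t * deriv f x)
    have h4 : HasDerivAt (fun u : ℝ => K * t ^ 2 * (u ^ 2 / 2)) (K * t ^ 2 * s) s := by
      have h5 := ((hasDerivAt_pow 2 s).div_const 2).const_mul (K * t ^ 2)
      exact h5.congr_deriv (by ring)
    have := (h2.sub h3).add h4
    exact this.congr_deriv (by ring)
  have hφ : AntitoneOn
      (fun u => f x - f (x - u * t) - t * deriv f x * u + K * t ^ 2 * (u ^ 2 / 2))
      (Set.Icc 0 1) := by
    apply antitoneOn_of_deriv_nonpos (convex_Icc 0 1)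
    · exact (Differentiable.continuous (fun s => (hφd s).differentiableAt)).continuousOn
    · intro s _; exact (hφd s).differentiableAt.differentiableWithinAt
    · intro s hs
      rw [interior_Icc] at hs
      rw [(hφd s).deriv]
      have := hχ' s ⟨hs.1.le, hs.2.le⟩
      linarith
  have := hφ (Set.left_mem_Icc.mpr zero_le_one) (Set.right_mem_Icc.mpr zero_le_one) zero_le_one
  simp only [one_mul, mul_one, zero_mul, mul_zero, sub_zero, one_pow] at this
  norm_num at this
  linarith

/-- Taylor-type lower bound when the second derivative is bounded above along the segment. -/
lemma taylor_lower {f : ℝ → ℝ} (hd0 : Differentiable ℝ f) (hd1 : Differentiable ℝ (deriv f))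
    (x t K : ℝ) (hK : ∀ s ∈ Set.Icc (0:ℝ) 1, deriv (deriv f) (x - s * t) ≤ K) :
    deriv f x * t - K * t ^ 2 / 2 ≤ f x - f (x - t) := by
  have hL : ∀ s : ℝ, HasDerivAt (fun u : ℝ => x - u * t) (-t) s := by
    intro s; simpa using ((hasDerivAt_id s).mul_const t).const_sub x
  have hχd : ∀ s : ℝ, HasDerivAt (fun u => t * deriv f (x - u * t) + t ^ 2 * K * u)
      (t * (deriv (deriv f) (x - s * t) * (-t)) + t ^ 2 * K) s := by
    intro s
    have h1 : HasDerivAt (fun u => deriv f (x - u * t)) (deriv (deriv f) (x - s * t) * (-t)) s :=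
      by have := ((hd1 (x - s * t)).hasDerivAt).comp s (hL s); exact this
    have h3 : HasDerivAt (fun u : ℝ => t ^ 2 * K * u) (t ^ 2 * K) s := by
      simpa using (hasDerivAt_id s).const_mul (t ^ 2 * K)
    exact (h1.const_mul t).add h3
  have hχ : MonotoneOn (fun u => t * deriv f (x - u * t) + t ^ 2 * K * u) (Set.Icc 0 1) := by
    apply monotoneOn_of_deriv_nonneg (convex_Icc 0 1)
    · exact (Differentiable.continuous (fun s => (hχd s).differentiableAt)).continuousOn
    · intro s _; exact (hχd s).differentiableAt.differentiableWithinAt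
    · intro s hs
      rw [interior_Icc] at hs
      rw [(hχd s).deriv]
      have := hK s ⟨hs.1.le, hs.2.le⟩
      nlinarith [sq_nonneg t]
  have hχ' : ∀ s ∈ Set.Icc (0:ℝ) 1,
      t * deriv f x ≤ t * deriv f (x - s * t) + t ^ 2 * K * s := by
    intro s hs
    have := hχ (Set.left_mem_Icc.mpr zero_le_one) hs hs.1
    simpa using this
  have hφd : ∀ s : ℝ, HasDerivAt
      (fun u => f x - f (x - u * t) - t * deriv f x * u + K * t ^ 2 * (u ^ 2 / 2))
      (t * deriv f (x - s * t) - t * deriv f x + K * t ^ 2 * s) s := by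
    intro s
    have h1 : HasDerivAt (fun u => f (x - u * t)) (deriv f (x - s * t) * (-t)) s :=
      ((hd0 (x - s * t)).hasDerivAt).comp s (hL s)
    have h2 : HasDerivAt (fun u => f x - f (x - u * t)) (-(deriv f (x - s * t) * (-t))) s :=
      h1.const_sub (f x)
    have h3 : HasDerivAt (fun u : ℝ => t * deriv f x * u) (t * deriv f x) s := by
      simpa using (hasDerivAt_id s).const_mul (t * deriv f x)
    have h4 : HasDerivAt (fun u : ℝ => K * t ^ 2 * (u ^ 2 / 2)) (K * t ^ 2 * s) s := by
      have h5 := ((hasDerivAt_pow 2 s).div_const 2).const_mul (K * t ^ 2)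
      exact h5.congr_deriv (by ring)
    have := (h2.sub h3).add h4
    exact this.congr_deriv (by ring)
  have hφ : MonotoneOn
      (fun u => f x - f (x - u * t) - t * deriv f x * u + K * t ^ 2 * (u ^ 2 / 2))
      (Set.Icc 0 1) := by
    apply monotoneOn_of_deriv_nonneg (convex_Icc 0 1)
    · exact (Differentiable.continuous (fun s => (hφd s).differentiableAt)).continuousOn
    · intro s _; exact (hφd s).differentiableAt.differentiableWithinAt
    · intro s hs
      rw [interior_Icc] at hs
      rw [(hφd s).deriv]
      have := hχ' s ⟨hs.1.le, hs.2.le⟩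
      linarith
  have := hφ (Set.left_mem_Icc.mpr zero_le_one) (Set.right_mem_Icc.mpr zero_le_one) zero_le_one
  simp only [one_mul, mul_one, zero_mul, mul_zero, sub_zero, one_pow] at this
  norm_num at this
  linarith
/-- Lemma B.3 (with corrected constants): residual bounds for q.s.c. functions. -/
theorem qsc_residual_bounds
    (m : ℕ) (M : ℝ) (hM : 0 < M) (f : ℝ → ℝ)
    (hconv : ConvexOn ℝ Set.univ f) (hf : ContDiff ℝ 3 f)
    (hqsc : ∀ s : ℝ, |deriv (deriv (deriv f)) s| ≤ M * deriv (deriv f) s)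
    (x δ : Fin m → ℝ) (hδ : ‖δ‖ ≤ 1 / M) :
    ((∑ i, f (x i)) - (∑ i, f (x i - δ i)) ≤
      (∑ i, deriv f (x i) * δ i) -
        (2 * Real.exp 1)⁻¹ * ∑ i, deriv (deriv f) (x i) * δ i ^ 2) ∧
    ((∑ i, f (x i)) - (∑ i, f (x i - Real.exp (-2) * δ i)) ≥
      Real.exp (-2) * ((∑ i, deriv f (x i) * δ i) -
        (2 * Real.exp 1)⁻¹ * ∑ i, deriv (deriv f) (x i) * δ i ^ 2)) := by
  -- differentiability facts
  have hf' : ContDiff ℝ (2+1) f := by norm_num; exact hf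
  have h1 : ContDiff ℝ 2 (deriv f) := (contDiff_succ_iff_deriv.mp hf').2.2
  have h1' : ContDiff ℝ (1+1) (deriv f) := by norm_num; exact h1
  have h2 : ContDiff ℝ 1 (deriv (deriv f)) := (contDiff_succ_iff_deriv.mp h1').2.2
  have hd0 : Differentiable ℝ f := hf.differentiable (by norm_num)
  have hd1 : Differentiable ℝ (deriv f) := h1.differentiable (by norm_num)
  have hd2 : Differentiable ℝ (deriv (deriv f)) := h2.differentiable (by norm_num)
  have hδi : ∀ i, |δ i| ≤ 1 / M := by
    intro i
    have := norm_le_pi_norm δ i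
    rw [Real.norm_eq_abs] at this
    linarith
  have hc : (0:ℝ) < Real.exp (-2) := Real.exp_pos _
  have hc1 : Real.exp (-2) ≤ 1 := Real.exp_le_one_iff.mpr (by norm_num)
  -- per-coordinate upper bound
  have h1i : ∀ i, f (x i) - f (x i - δ i) ≤
      deriv f (x i) * δ i - (2 * Real.exp 1)⁻¹ * (deriv (deriv f) (x i) * δ i ^ 2) := by
    intro i
    have hK : ∀ s ∈ Set.Icc (0:ℝ) 1,
        (Real.exp 1)⁻¹ * deriv (deriv f) (x i) ≤ deriv (deriv f) (x i - s * δ i) := by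
      intro s hs
      have habs : |(x i - s * δ i) - x i| ≤ 1 / M := by
        rw [show x i - s * δ i - x i = -(s * δ i) by ring, abs_neg, abs_mul,
          abs_of_nonneg hs.1]
        have := hδi i
        nlinarith [abs_nonneg (δ i), hs.2]
      exact (qsc_sandwich M hM hd2 hqsc (x i) (x i - s * δ i) habs).1
    have := taylor_upper hd0 hd1 (x i) (δ i) _ hK
    have heq : (Real.exp 1)⁻¹ * deriv (deriv f) (x i) * δ i ^ 2 / 2 =
        (2 * Real.exp 1)⁻¹ * (deriv (deriv f) (x i) * δ i ^ 2) := by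
      rw [mul_inv]; ring
    linarith
  -- per-coordinate lower bound
  have h2i : ∀ i, Real.exp (-2) * (deriv f (x i) * δ i -
      (2 * Real.exp 1)⁻¹ * (deriv (deriv f) (x i) * δ i ^ 2)) ≤
      f (x i) - f (x i - Real.exp (-2) * δ i) := by
    intro i
    have hK : ∀ s ∈ Set.Icc (0:ℝ) 1,
        deriv (deriv f) (x i - s * (Real.exp (-2) * δ i)) ≤
          Real.exp 1 * deriv (deriv f) (x i) := by
      intro s hs
      have habs : |(x i - s * (Real.exp (-2) * δ i)) - x i| ≤ 1 / M := by
        rw [show x i - s * (Real.exp (-2) * δ i) - x i = -(s * (Real.exp (-2) * δ i)) by ring,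
          abs_neg, abs_mul, abs_mul, abs_of_nonneg hs.1, abs_of_nonneg hc.le]
        have := hδi i
        have hsc : s * Real.exp (-2) ≤ 1 := by nlinarith [hs.1, hs.2]
        nlinarith [mul_le_mul_of_nonneg_right hsc (abs_nonneg (δ i))]
      exact (qsc_sandwich M hM hd2 hqsc (x i) _ habs).2
    have hT := taylor_lower hd0 hd1 (x i) (Real.exp (-2) * δ i) _ hK
    have hA : Real.exp 1 * Real.exp (-2) ^ 2 = Real.exp (-2) * (Real.exp 1)⁻¹ := by
      rw [← Real.exp_neg, sq, ← Real.exp_add, ← Real.exp_add, ← Real.exp_add]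
      norm_num
    have heq : deriv f (x i) * (Real.exp (-2) * δ i) -
        Real.exp 1 * deriv (deriv f) (x i) * (Real.exp (-2) * δ i) ^ 2 / 2 =
        Real.exp (-2) * (deriv f (x i) * δ i -
          (2 * Real.exp 1)⁻¹ * (deriv (deriv f) (x i) * δ i ^ 2)) := by
      rw [mul_inv]
      linear_combination (-(deriv (deriv f) (x i) * δ i ^ 2) / 2) * hA
    linarith
  constructor
  · have hsum := Finset.sum_le_sum (fun i (_ : i ∈ Finset.univ) => h1i i)
    rw [Finset.sum_sub_distrib, Finset.sum_sub_distrib, ← Finset.mul_sum] at hsum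
    exact hsum
  · have hsum := Finset.sum_le_sum (fun i (_ : i ∈ Finset.univ) => h2i i)
    rw [← Finset.mul_sum, Finset.sum_sub_distrib, Finset.sum_sub_distrib,
      ← Finset.mul_sum] at hsum
    exact hsum
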